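/- The map E ↦ S¹ ×_g E is a bijection between the chain transitive components of the discrete-time flow generated by g on F and the chain transitive components of the skew-product flow φᵗ on S¹ × F. -/

import Mathlib

set_option maxHeartbeats 2000000
set_option synthInstance.maxHeartbeats 400000
set_option linter.unusedSectionVars false

/-- An `(ε, S)`-chain from `x` to `y` for `σ`, with respect to the distance function `d`. -/
def IsChainFrom {U T : Type*} (d : U → U → ℝ) (σ : T → U → U) (S : Set T)
    (ε : U → ℝ) (x y : U) : Prop :=
  ∃ k : ℕ, ∃ ts : Fin (k + 1) → T, ∃ xs : Fin (k + 2) → U,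
    xs 0 = x ∧ xs (Fin.last (k + 1)) = y ∧ (∀ i, ts i ∈ S) ∧
    ∀ i : Fin (k + 1),
      d (xs i.succ) (σ (ts i) (xs i.castSucc)) < ε (σ (ts i) (xs i.castSucc))

/-- `x` and `y` are chain equivalent: for every positive continuous `ε` and every
threshold `t > 0` there are `(ε,t)`-chains from `x` to `y` and from `y` to `x`,
with all chain times in `Times t`. -/
def ChainEquiv {U T : Type*} [TopologicalSpace U] (d : U → U → ℝ) (σ : T → U → U)
    (Times : ℝ → Set T) (x y : U) : Prop :=
  ∀ ε : U → ℝ, Continuous ε → (∀ u, 0 < ε u) → ∀ t : ℝ, 0 < t →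
    IsChainFrom d σ (Times t) ε x y ∧ IsChainFrom d σ (Times t) ε y x

/-- The chain transitive components: equivalence classes of chain equivalence
inside the chain recurrent set. -/
def ChainComponents {U T : Type*} [TopologicalSpace U] (d : U → U → ℝ) (σ : T → U → U)
    (Times : ℝ → Set T) : Set (Set U) :=
  {C | ∃ x, ChainEquiv d σ Times x x ∧
    C = {y | ChainEquiv d σ Times y y ∧ ChainEquiv d σ Times x y}}

theorem isChainFrom_trans {U T : Type*} {d : U → U → ℝ} {σ : T → U → U} {S : Set T}
    {ε : U → ℝ} {x y z : U} (h1 : IsChainFrom d σ S ε x y) (h2 : IsChainFrom d σ S ε y z) :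
    IsChainFrom d σ S ε x z := by
  obtain ⟨k1, ts1, xs1, h10, h1l, h1S, h1c⟩ := h1
  obtain ⟨k2, ts2, xs2, h20, h2l, h2S, h2c⟩ := h2
  refine ⟨k1 + 1 + k2,
    fun i => if h : i.val ≤ k1 then ts1 ⟨i.val, by omega⟩ else ts2 ⟨i.val - (k1+1), by omega⟩,
    fun i => if h : i.val ≤ k1 + 1 then xs1 ⟨i.val, by omega⟩ else xs2 ⟨i.val - (k1+1), by omega⟩,
    ?_, ?_, ?_, ?_⟩
  · simpa using h10
  · have h : ¬ ((Fin.last (k1 + 1 + k2 + 1)).val ≤ k1 + 1) := by simp [Fin.last]; omega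
    simp only [dif_neg h]
    convert h2l using 2
    simp [Fin.last]; omega
  · intro i
    by_cases h : i.val ≤ k1
    · simp only [dif_pos h]; exact h1S _
    · simp only [dif_neg h]; exact h2S _
  · intro i
    by_cases h : i.val ≤ k1
    · have hc : i.castSucc.val ≤ k1 + 1 := by simp [Fin.castSucc, Fin.castAdd, Fin.castLE]; omega
      have hs : i.succ.val ≤ k1 + 1 := by simp; omega
      simp only [dif_pos h, dif_pos hc, dif_pos hs]
      have := h1c ⟨i.val, by omega⟩
      convert this using 3 <;> simp [Fin.succ, Fin.castSucc, Fin.castAdd, Fin.castLE]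
    · have hs : ¬ i.succ.val ≤ k1 + 1 := by simp; omega
      simp only [dif_neg h, dif_neg hs]
      by_cases hc : i.castSucc.val ≤ k1 + 1
      · -- i.val = k1 + 1
        have hi : i.val = k1 + 1 := by
          have := i.isLt
          simp [Fin.castSucc, Fin.castAdd, Fin.castLE] at hc
          omega
        simp only [dif_pos hc]
        have e1 : xs1 ⟨i.castSucc.val, by omega⟩ = xs2 ⟨i.castSucc.val - (k1+1), by omega⟩ := by
          have : (⟨i.castSucc.val, by omega⟩ : Fin (k1+2)) = Fin.last (k1+1) := by
            simp [Fin.castSucc, Fin.castAdd, Fin.castLE, Fin.last, hi]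
          rw [this, h1l]
          have : (⟨i.castSucc.val - (k1+1), by omega⟩ : Fin (k2+2)) = 0 := by
            simp [Fin.castSucc, Fin.castAdd, Fin.castLE, hi]
          rw [this, h20]
        rw [e1]
        have := h2c ⟨i.val - (k1+1), by omega⟩
        convert this using 3 <;> simp [Fin.succ, Fin.castSucc, Fin.castAdd, Fin.castLE] <;> omega
      · simp only [dif_neg hc]
        have := h2c ⟨i.val - (k1+1), by omega⟩
        convert this using 3 <;> simp [Fin.succ, Fin.castSucc, Fin.castAdd, Fin.castLE] <;> omega

def ChainAll {U T : Type*} [TopologicalSpace U] (d : U → U → ℝ) (σ : T → U → U)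
    (Times : ℝ → Set T) (x y : U) : Prop :=
  ∀ ε : U → ℝ, Continuous ε → (∀ u, 0 < ε u) → ∀ t : ℝ, 0 < t →
    IsChainFrom d σ (Times t) ε x y

theorem isChainFrom_map {U T U' T' : Type*} {d : U → U → ℝ} {σ : T → U → U} {S : Set T}
    {ε : U → ℝ} {d' : U' → U' → ℝ} {σ' : T' → U' → U'} {S' : Set T'} {ε' : U' → ℝ}
    (f : U → U')
    (hstep : ∀ time ∈ S, ∀ u v : U, d v (σ time u) < ε (σ time u) →
      ∃ time' ∈ S', d' (f v) (σ' time' (f u)) < ε' (σ' time' (f u)))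
    {x y : U} (h : IsChainFrom d σ S ε x y) : IsChainFrom d' σ' S' ε' (f x) (f y) := by
  obtain ⟨k, ts, xs, h0, hl, hS, hc⟩ := h
  choose ts' hS' hc' using fun i : Fin (k+1) =>
    hstep (ts i) (hS i) (xs i.castSucc) (xs i.succ) (hc i)
  exact ⟨k, ts', fun i => f (xs i), by simp only []; rw [h0], by simp only []; rw [hl], hS', hc'⟩

theorem isChainFrom_prepend_pow {F : Type*} [NormedAddCommGroup F] [NormedSpace ℝ F]
    (g1 : F →L[ℝ] F) {ε : F → ℝ} {t : ℝ} (ht : 0 < t) {x y : F} (N : ℕ)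
    (h : IsChainFrom (fun x y => ‖x - y‖) (fun (n : ℕ) (x : F) => (g1 ^ n) x)
      {n : ℕ | t + N < (n : ℝ)} ε x y) :
    IsChainFrom (fun x y => ‖x - y‖) (fun (n : ℕ) (x : F) => (g1 ^ n) x)
      {n : ℕ | t < (n : ℝ)} ε ((g1 ^ N) x) y := by
  obtain ⟨k, ts, xs, h0, hl, hS, hc⟩ := h
  have hN0 : ∀ i, N ≤ ts i := by
    intro i
    have h1 := hS i
    simp only [Set.mem_setOf_eq] at h1
    have : (N : ℝ) < ts i := by linarith
    exact_mod_cast this.le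
  refine ⟨k, Function.update ts 0 (ts 0 - N), Function.update xs 0 ((g1 ^ N) x),
    by simp, ?_, ?_, ?_⟩
  · rw [Function.update_of_ne (by simp [Fin.ext_iff]) _ xs, hl]
  · intro i
    by_cases hi : i = 0
    · subst hi
      rw [Function.update_self]
      simp only [Set.mem_setOf_eq]
      have h1 := hS 0
      simp only [Set.mem_setOf_eq] at h1
      have h2 : ((ts 0 - N : ℕ) : ℝ) = (ts 0 : ℝ) - N := by
        have := hN0 0
        push_cast [this]
        ring
      rw [h2]
      linarith
    · rw [Function.update_of_ne hi]
      have h1 := hS i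
      simp only [Set.mem_setOf_eq] at h1
      have : (0:ℝ) ≤ N := by positivity
      simp only [Set.mem_setOf_eq]
      linarith
  · intro i
    have hsucc : (i.succ : Fin (k+2)) ≠ 0 := Fin.succ_ne_zero i
    rw [Function.update_of_ne hsucc _ xs]
    by_cases hi : i = 0
    · subst hi
      have hcast : (Fin.castSucc (0 : Fin (k+1))) = (0 : Fin (k+2)) := rfl
      rw [Function.update_self, hcast, Function.update_self]
      have harith : (g1 ^ (ts 0 - N)) ((g1 ^ N) x) = (g1 ^ (ts 0)) x := by
        have hpows : (g1 ^ (ts 0 - N)) * (g1 ^ N) = g1 ^ (ts 0) := by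
          rw [← pow_add]
          congr 1
          have := hN0 0
          omega
        calc (g1 ^ (ts 0 - N)) ((g1 ^ N) x) = ((g1 ^ (ts 0 - N)) * (g1 ^ N)) x := rfl
          _ = (g1 ^ (ts 0)) x := by rw [hpows]
      simp only []
      rw [harith, ← h0]
      have hc0 : (Fin.castSucc (0 : Fin (k+1))) = (0 : Fin (k+2)) := rfl
      rw [← hc0]
      exact hc 0
    · have hcast : (i.castSucc : Fin (k+2)) ≠ 0 := by
        exact Fin.castSucc_ne_zero_iff.mpr hi
      rw [Function.update_of_ne hi, Function.update_of_ne hcast]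
      exact hc i

theorem isChainFrom_append_pow {F : Type*} [NormedAddCommGroup F] [NormedSpace ℝ F]
    (g1 : F →L[ℝ] F) {ε : F → ℝ} {t : ℝ} {x y : F} (N : ℕ)
    (h : IsChainFrom (fun x y => ‖x - y‖) (fun (n : ℕ) (x : F) => (g1 ^ n) x)
      {n : ℕ | t < (n : ℝ)}
      (fun u => min (ε u) (ε ((g1 ^ N) u) / (‖(g1 ^ N : F →L[ℝ] F)‖ + 1))) x y)
    (hεp : ∀ u, 0 < ε u) :
    IsChainFrom (fun x y => ‖x - y‖) (fun (n : ℕ) (x : F) => (g1 ^ n) x)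
      {n : ℕ | t < (n : ℝ)} ε x ((g1 ^ N) y) := by
  obtain ⟨k, ts, xs, h0, hl, hS, hc⟩ := h
  refine ⟨k, Function.update ts (Fin.last k) (ts (Fin.last k) + N),
    Function.update xs (Fin.last (k+1)) ((g1 ^ N) y), ?_, by simp, ?_, ?_⟩
  · rw [Function.update_of_ne (by simp [Fin.ext_iff]) _ xs, h0]
  · intro i
    by_cases hi : i = Fin.last k
    · subst hi
      rw [Function.update_self]
      have h1 := hS (Fin.last k)
      simp only [Set.mem_setOf_eq] at h1 ⊢
      have : (0:ℝ) ≤ N := by positivity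
      push_cast
      linarith
    · rw [Function.update_of_ne hi]
      exact hS i
  · intro i
    have hcast : (i.castSucc : Fin (k+2)) ≠ Fin.last (k+1) := by
      simp [Fin.ext_iff]
      have := i.isLt
      omega
    rw [Function.update_of_ne hcast _ xs]
    by_cases hi : i = Fin.last k
    · subst hi
      have hsucc : ((Fin.last k).succ : Fin (k+2)) = Fin.last (k+1) := by
        simp [Fin.ext_iff]
      rw [Function.update_self, hsucc, Function.update_self]
      have harith : (g1 ^ (ts (Fin.last k) + N)) (xs (Fin.last k).castSucc)
          = (g1 ^ N) ((g1 ^ (ts (Fin.last k))) (xs (Fin.last k).castSucc)) := by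
        have hpows : g1 ^ (ts (Fin.last k) + N) = (g1 ^ N) * (g1 ^ (ts (Fin.last k))) := by
          rw [← pow_add]
          congr 1
          omega
        rw [hpows]; rfl
      simp only []
      rw [harith]
      have hcond := hc (Fin.last k)
      have hlast : xs (Fin.last k).succ = y := by rw [hsucc, hl]
      rw [hlast] at hcond
      set w := (g1 ^ (ts (Fin.last k))) (xs (Fin.last k).castSucc) with hw
      have hmin : min (ε w) (ε ((g1 ^ N) w) / (‖(g1 ^ N : F →L[ℝ] F)‖ + 1))
          ≤ ε ((g1 ^ N) w) / (‖(g1 ^ N : F →L[ℝ] F)‖ + 1) := min_le_right _ _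
      have hnorm : ‖(g1 ^ N) y - (g1 ^ N) w‖ ≤ ‖(g1 ^ N : F →L[ℝ] F)‖ * ‖y - w‖ := by
        rw [← map_sub]
        exact ContinuousLinearMap.le_opNorm _ _
      set A := ‖(g1 ^ N : F →L[ℝ] F)‖ with hA
      have hAnn : 0 ≤ A := norm_nonneg _
      have h2 : ‖y - w‖ < ε ((g1 ^ N) w) / (A + 1) := lt_of_lt_of_le hcond hmin
      have h3 : A * ‖y - w‖ ≤ A * (ε ((g1 ^ N) w) / (A + 1)) :=
        mul_le_mul_of_nonneg_left h2.le hAnn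
      have h4 : A * (ε ((g1 ^ N) w) / (A + 1)) < ε ((g1 ^ N) w) := by
        rw [mul_div_assoc']
        rw [div_lt_iff₀ (by linarith)]
        have := hεp ((g1 ^ N) w)
        nlinarith
      calc ‖(g1 ^ N) y - (g1 ^ N) w‖ ≤ A * ‖y - w‖ := hnorm
        _ ≤ A * (ε ((g1 ^ N) w) / (A + 1)) := h3
        _ < ε ((g1 ^ N) w) := h4
    · have hsucc : (i.succ : Fin (k+2)) ≠ Fin.last (k+1) := by
        simp [Fin.ext_iff] at hi ⊢
        have := i.isLt
        omega
      rw [Function.update_of_ne hi, Function.update_of_ne hsucc _ xs]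
      exact lt_of_lt_of_le (hc i) (min_le_left _ _)

noncomputable def rho (α : UnitAddCircle) : ℝ := (AddCircle.equivIco 1 0 α : ℝ)

theorem rho_mem (α : UnitAddCircle) : rho α ∈ Set.Ico (0:ℝ) 1 := by
  have := (AddCircle.equivIco 1 0 α).2
  simpa [rho] using this

theorem coe_rho (α : UnitAddCircle) : ((rho α : ℝ) : UnitAddCircle) = α :=
  (AddCircle.equivIco 1 0).symm_apply_apply α

theorem circle_dist_coe (a b : ℝ) :
    dist ((a : ℝ) : UnitAddCircle) ((b : ℝ) : UnitAddCircle) = |a - b - round (a - b)| := by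
  rw [dist_eq_norm]
  have : ((a : ℝ) : UnitAddCircle) - ((b : ℝ) : UnitAddCircle) = ((a - b : ℝ) : UnitAddCircle) := by
    simp [QuotientAddGroup.mk_sub]
  rw [this, AddCircle.norm_eq]
  norm_num

theorem rho_coe (x : ℝ) : rho ((x : ℝ) : UnitAddCircle) = Int.fract x := by
  have := AddCircle.coe_equivIco_mk_apply (p := (1:ℝ)) x
  simpa [rho] using this


theorem coe_int_zero (n : ℤ) : (((n : ℝ)) : UnitAddCircle) = 0 := by
  have : ((n : ℝ)) ∈ AddSubgroup.zmultiples (1 : ℝ) := ⟨n, by simp⟩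
  exact (QuotientAddGroup.eq_zero_iff _).2 this

theorem coe_add_int (s : ℝ) (n : ℤ) : ((s + (n:ℝ) : ℝ) : UnitAddCircle) = (s : UnitAddCircle) := by
  have : ((s + (n:ℝ) : ℝ) : UnitAddCircle) = (s : UnitAddCircle) + (((n:ℝ)) : UnitAddCircle) := rfl
  rw [this, coe_int_zero, add_zero]

section Cocycle
variable {F : Type*} [NormedAddCommGroup F] [NormedSpace ℝ F] [CompleteSpace F]
  {X g ginv : ℝ → F →L[ℝ] F}

theorem ginv_eq_inverse (hinv : ∀ s, g s ∘L ginv s = 1 ∧ ginv s ∘L g s = 1) (s : ℝ) :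
    ginv s = Ring.inverse (g s) := by
  have : Ring.inverse ((⟨g s, ginv s, (hinv s).1, (hinv s).2⟩ : (F →L[ℝ] F)ˣ) : F →L[ℝ] F)
      = ginv s := Ring.inverse_unit _
  simpa using this.symm

theorem hasDerivAt_ginv (hg : ∀ t, HasDerivAt g (X t ∘L g t) t)
    (hinv : ∀ s, g s ∘L ginv s = 1 ∧ ginv s ∘L g s = 1) (t : ℝ) :
    HasDerivAt (fun s => Ring.inverse (g s) : ℝ → F →L[ℝ] F) (-(ginv t * X t)) t := by
  set u : (F →L[ℝ] F)ˣ := ⟨g t, ginv t, (hinv t).1, (hinv t).2⟩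
  have h1 := (hasFDerivAt_ringInverse (𝕜 := ℝ) u).comp_hasDerivAt t (hg t)
  refine h1.congr_deriv (Eq.symm ?_)
  show -(ginv t * X t) = -(ContinuousLinearMap.mulLeftRight ℝ _ (↑u⁻¹) (↑u⁻¹)) (X t ∘L g t)
  have : (ContinuousLinearMap.mulLeftRight ℝ (F →L[ℝ] F) (↑u⁻¹) (↑u⁻¹)) (X t ∘L g t)
      = (↑u⁻¹ : F →L[ℝ] F) * (X t * g t) * (↑u⁻¹ : F →L[ℝ] F) := by
    simp [ContinuousLinearMap.mulLeftRight_apply]; rfl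
  rw [this]
  have hu : (↑u⁻¹ : F →L[ℝ] F) = ginv t := rfl
  have hgu : g t * ginv t = 1 := (hinv t).1
  rw [hu]
  rw [mul_assoc (ginv t) (X t * g t) (ginv t), mul_assoc (X t) (g t) (ginv t), hgu, mul_one]

theorem g_add_one (hXper : ∀ t, X (t + 1) = X t) (hg0 : g 0 = 1)
    (hg : ∀ t, HasDerivAt g (X t ∘L g t) t)
    (hinv : ∀ s, g s ∘L ginv s = 1 ∧ ginv s ∘L g s = 1) (t : ℝ) :
    g (t + 1) = g t * g 1 := by
  set k : ℝ → F →L[ℝ] F := fun s => Ring.inverse (g s) * g (s + 1) with hk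
  have hkd : ∀ s, HasDerivAt k 0 s := by
    intro s
    have h2 : HasDerivAt (fun r => g (r + 1)) (X s * g (s + 1)) s := by
      have := (hg (s + 1)).scomp s ((hasDerivAt_id s).add_const 1)
      simpa [hXper s, ContinuousLinearMap.mul_def, Function.comp_def] using this
    have := (hasDerivAt_ginv hg hinv s).mul h2
    refine this.congr_deriv (Eq.symm ?_)
    rw [ginv_eq_inverse hinv s]
    rw [neg_mul, mul_assoc, neg_add_cancel]
  have hconst : k t = k 0 := by
    apply is_const_of_deriv_eq_zero (fun x => (hkd x).differentiableAt)
    intro x; exact (hkd x).deriv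
  have hk0 : k 0 = g 1 := by
    simp only [hk, hg0, zero_add]
    rw [Ring.inverse_one, one_mul]
  have : Ring.inverse (g t) * g (t + 1) = g 1 := hconst.trans hk0
  have h3 := congrArg (fun a => g t * a) this
  rw [← mul_assoc, ← ginv_eq_inverse hinv t] at h3
  have : g t * ginv t = 1 := (hinv t).1
  rwa [this, one_mul] at h3

theorem g_add_nat (hXper : ∀ t, X (t + 1) = X t) (hg0 : g 0 = 1)
    (hg : ∀ t, HasDerivAt g (X t ∘L g t) t)
    (hinv : ∀ s, g s ∘L ginv s = 1 ∧ ginv s ∘L g s = 1) (t : ℝ) (n : ℕ) :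
    g (t + n) = g t * (g 1) ^ n := by
  induction n with
  | zero => simp
  | succ m ih =>
    rw [Nat.cast_add, Nat.cast_one, ← add_assoc, g_add_one hXper hg0 hg hinv, ih, pow_succ,
      mul_assoc]

theorem ginv_apply_g (hinv : ∀ s, g s ∘L ginv s = 1 ∧ ginv s ∘L g s = 1) (s : ℝ) (x : F) :
    ginv s (g s x) = x := by
  have := congrArg (fun f : F →L[ℝ] F => f x) (hinv s).2
  simpa using this

theorem g_apply_ginv (hinv : ∀ s, g s ∘L ginv s = 1 ∧ ginv s ∘L g s = 1) (s : ℝ) (x : F) :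
    g s (ginv s x) = x := by
  have := congrArg (fun f : F →L[ℝ] F => f x) (hinv s).1
  simpa using this

theorem continuous_g (hg : ∀ t, HasDerivAt g (X t ∘L g t) t) : Continuous g :=
  continuous_iff_continuousAt.2 fun t => (hg t).continuousAt

theorem continuous_ginv (hg : ∀ t, HasDerivAt g (X t ∘L g t) t)
    (hinv : ∀ s, g s ∘L ginv s = 1 ∧ ginv s ∘L g s = 1) : Continuous ginv := by
  have : ginv = fun s => Ring.inverse (g s) := funext fun s => ginv_eq_inverse hinv s
  rw [this]
  refine continuous_iff_continuousAt.2 fun t => ?_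
  exact ContinuousAt.comp (g := Ring.inverse) (f := g) (x := t)
    (NormedRing.inverse_continuousAt (⟨g t, ginv t, (hinv t).1, (hinv t).2⟩ : (F →L[ℝ] F)ˣ))
    (continuous_g hg).continuousAt

theorem ginv_zero (hg0 : g 0 = 1) (hinv : ∀ s, g s ∘L ginv s = 1 ∧ ginv s ∘L g s = 1) :
    ginv 0 = 1 := by
  have := (hinv 0).2
  rw [hg0] at this
  simpa [ContinuousLinearMap.one_def] using this

end Cocycle


section EpsFlow
variable {F : Type*} [NormedAddCommGroup F] [NormedSpace ℝ F] [CompleteSpace F]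
  {X g ginv : ℝ → F →L[ℝ] F}

theorem round_diff_mem (α β : UnitAddCircle) :
    round (rho β - rho α) = -1 ∨ round (rho β - rho α) = 0 ∨ round (rho β - rho α) = 1 := by
  have h1 := rho_mem α; have h2 := rho_mem β
  simp only [Set.mem_Ico] at h1 h2
  have habs : |(round (rho β - rho α) : ℝ)| < 3/2 := by
    have := abs_sub_round (rho β - rho α)
    have h3 : |rho β - rho α| < 1 := by rw [abs_lt]; constructor <;> linarith
    calc |(round (rho β - rho α) : ℝ)| ≤ |(round (rho β - rho α) : ℝ) - (rho β - rho α)| + |rho β - rho α| := by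
          have := abs_sub_abs_le_abs_sub ((round (rho β - rho α) : ℝ)) (rho β - rho α)
          have := abs_sub (round (rho β - rho α) : ℝ) (rho β - rho α)
          calc |(round (rho β - rho α) : ℝ)| = |((round (rho β - rho α) : ℝ) - (rho β - rho α)) + (rho β - rho α)| := by ring_nf
            _ ≤ _ := abs_add_le _ _
      _ < 3/2 := by rw [abs_sub_comm]; linarith [abs_sub_round (rho β - rho α)]
  have : |round (rho β - rho α)| ≤ 1 := by
    by_contra hcon
    push_neg at hcon
    have : (2 : ℝ) ≤ |(round (rho β - rho α) : ℝ)| := by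
      rw [← Int.cast_abs]
      exact_mod_cast hcon
    linarith
  rw [abs_le] at this
  omega

theorem eps_flow_exists (hX : Continuous X)
    (hg : ∀ t, HasDerivAt g (X t ∘L g t) t)
    (hinv : ∀ s, g s ∘L ginv s = 1 ∧ ginv s ∘L g s = 1)
    (εd : F → ℝ) (hεc : Continuous εd) (hεp : ∀ u, 0 < εd u) :
    ∃ εf : UnitAddCircle × F → ℝ, Continuous εf ∧ (∀ p, 0 < εf p) ∧
      ∀ p q : UnitAddCircle × F, dist q.1 p.1 + ‖q.2 - p.2‖ < εf p →
        ‖ginv (rho q.1) q.2 - ginv (rho p.1 + round (rho q.1 - rho p.1)) p.2‖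
          < εd (ginv (rho p.1 + round (rho q.1 - rho p.1)) p.2) := by
  -- bounds for ginv and Lipschitz constant on [-1,2]
  obtain ⟨C0, hC0⟩ := (isCompact_Icc (a := (-1:ℝ)) (b := 2)).exists_bound_of_continuousOn
    (continuous_ginv hg hinv).continuousOn
  set C := max C0 1 with hC
  have hC1 : (1:ℝ) ≤ C := le_max_right _ _
  have hCpos : (0:ℝ) < C := lt_of_lt_of_le one_pos hC1
  have hCb : ∀ s ∈ Set.Icc (-1:ℝ) 2, ‖ginv s‖ ≤ C := fun s hs => (hC0 s hs).trans (le_max_left _ _)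
  obtain ⟨B0, hB0⟩ := (isCompact_Icc (a := (-1:ℝ)) (b := 2)).exists_bound_of_continuousOn
    (Continuous.continuousOn (hX.clm_comp (continuous_g hg)))
  set B := max B0 0 with hB
  have hBnn : (0:ℝ) ≤ B := le_max_right _ _
  have hgLip : ∀ a ∈ Set.Icc (-1:ℝ) 2, ∀ b ∈ Set.Icc (-1:ℝ) 2, ‖g b - g a‖ ≤ B * |b - a| := by
    intro a ha b hb
    have := Convex.norm_image_sub_le_of_norm_hasDerivWithin_le
      (f := g) (f' := fun t => X t ∘L g t) (C := B)
      (fun x hx => (hg x).hasDerivWithinAt)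
      (fun x hx => (hB0 x hx).trans (le_max_left _ _)) (convex_Icc _ _) ha hb
    calc ‖g b - g a‖ ≤ B * ‖b - a‖ := this
      _ = B * |b - a| := by rw [Real.norm_eq_abs]
  set K := C * B * C with hK
  have hKnn : (0:ℝ) ≤ K := by positivity
  have hginvLip : ∀ a ∈ Set.Icc (-1:ℝ) 2, ∀ b ∈ Set.Icc (-1:ℝ) 2,
      ‖ginv b - ginv a‖ ≤ K * |b - a| := by
    intro a ha b hb
    have hid : ginv b - ginv a = ginv b * (g a - g b) * ginv a := by
      have h1 : ginv b * g a * ginv a - ginv b * g b * ginv a = ginv b - ginv a := by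
        have e1 : ginv b * g a * ginv a = ginv b * (g a * ginv a) := by rw [mul_assoc]
        have e2 : g a * ginv a = 1 := (hinv a).1
        have e3 : ginv b * g b = 1 := (hinv b).2
        rw [e1, e2, mul_one, e3, one_mul]
      rw [← h1, mul_sub, sub_mul]
    rw [hid]
    calc ‖ginv b * (g a - g b) * ginv a‖ ≤ ‖ginv b * (g a - g b)‖ * ‖ginv a‖ := norm_mul_le _ _
      _ ≤ ‖ginv b‖ * ‖g a - g b‖ * ‖ginv a‖ :=
          mul_le_mul_of_nonneg_right (norm_mul_le _ _) (norm_nonneg _)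
      _ ≤ C * (B * |b - a|) * C := by
          apply mul_le_mul
          · exact mul_le_mul (hCb b hb) (by rw [abs_sub_comm b a]; exact hgLip b hb a ha)
              (norm_nonneg _) hCpos.le
          · exact hCb a ha
          · exact norm_nonneg _
          · positivity
      _ = K * |b - a| := by rw [hK]; ring
  -- the auxiliary function T
  set T : ℝ × F → ℝ := fun sv => εd (ginv sv.1 sv.2) / (C + K * ‖sv.2‖) with hT
  have hTden : ∀ v : F, (0:ℝ) < C + K * ‖v‖ := by
    intro v; have : (0:ℝ) ≤ K * ‖v‖ := by positivity
    linarith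
  have hTpos : ∀ sv, 0 < T sv := fun sv => div_pos (hεp _) (hTden _)
  have hTcont : Continuous T := by
    apply Continuous.div
    · exact hεc.comp ((continuous_ginv hg hinv).comp continuous_fst |>.clm_apply continuous_snd)
    · exact continuous_const.add (continuous_const.mul (continuous_snd.norm))
    · intro sv; exact (hTden sv.2).ne'
  set G : UnitAddCircle × F → ℝ := fun p =>
    min (1/2) (min (T (rho p.1 - 1, p.2)) (min (T (rho p.1, p.2)) (T (rho p.1 + 1, p.2)))) with hG
  have hGpos : ∀ p, 0 < G p := by
    intro p
    exact lt_min (by norm_num) (lt_min (hTpos _) (lt_min (hTpos _) (hTpos _)))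
  have hGhalf : ∀ p, G p ≤ 1/2 := fun p => min_le_left _ _
  -- the infimal convolution
  set εf : UnitAddCircle × F → ℝ := fun p => ⨅ q : UnitAddCircle × F, (G q + dist p q) with hεf
  have hbdd : ∀ p : UnitAddCircle × F, BddBelow (Set.range fun q => G q + dist p q) := by
    intro p
    refine ⟨0, ?_⟩
    rintro x ⟨q, rfl⟩
    have := (hGpos q).le
    have := dist_nonneg (x := p) (y := q)
    positivity
  have hεf_le : ∀ p, εf p ≤ G p := by
    intro p
    have := ciInf_le (hbdd p) p
    simpa using this
  have hεf_lip : ∀ p p', εf p ≤ εf p' + dist p p' := by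
    intro p p'
    rw [hεf]
    have : ∀ q, εf p - dist p p' ≤ G q + dist p' q := by
      intro q
      have h1 := ciInf_le (hbdd p) q
      have h2 := dist_triangle p p' q
      simp only [hεf] at h1 ⊢
      linarith
    have := le_ciInf (fun q => by linarith [this q] : ∀ q : UnitAddCircle × F, εf p - dist p p' ≤ G q + dist p' q)
    simp only [hεf] at this ⊢
    linarith
  have hεf_cont : Continuous εf := by
    have : LipschitzWith 1 εf := by
      apply LipschitzWith.of_dist_le_mul
      intro p p'
      rw [Real.dist_eq]
      push_cast
      rw [one_mul, abs_sub_le_iff]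
      constructor
      · linarith [hεf_lip p p']
      · linarith [hεf_lip p' p, dist_comm p p']
    exact this.continuous
  have hεf_pos : ∀ p, 0 < εf p := by
    intro p
    -- tube lemma argument
    have hKc : IsCompact ((Set.Icc (-1:ℝ) 2) ×ˢ ({p.2} : Set F)) :=
      isCompact_Icc.prod isCompact_singleton
    have hne : ((Set.Icc (-1:ℝ) 2) ×ˢ ({p.2} : Set F)).Nonempty := ⟨(0, p.2), by norm_num⟩
    obtain ⟨z, hz, hzmin⟩ := hKc.exists_isMinOn hne hTcont.continuousOn
    set m := T z with hm
    have hmpos : 0 < m := hTpos z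
    have hopen : IsOpen {w : ℝ × F | m / 2 < T w} := isOpen_lt continuous_const hTcont
    have hsub : (Set.Icc (-1:ℝ) 2) ×ˢ ({p.2} : Set F) ⊆ {w | m / 2 < T w} := by
      intro w hw
      have := hzmin hw
      simp only [Set.mem_setOf_eq]
      calc m / 2 < m := by linarith
        _ ≤ T w := this
    obtain ⟨u, v, hu, hv, hIu, hpv, huv⟩ := generalized_tube_lemma isCompact_Icc
      isCompact_singleton hopen hsub
    obtain ⟨δ, hδpos, hδ⟩ := Metric.isOpen_iff.1 hv p.2 (hpv rfl)
    have key : ∀ q : UnitAddCircle × F, dist p q < δ → min (1/2) (m/2) ≤ G q := by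
      intro q hq
      have hq2 : q.2 ∈ v := by
        apply hδ
        rw [Metric.mem_ball, dist_comm]
        exact lt_of_le_of_lt (le_trans (le_max_right _ _) (le_of_eq (Prod.dist_eq (x := p) (y := q)).symm)) hq
      have hmem : ∀ s ∈ Set.Icc (-1:ℝ) 2, m / 2 < T (s, q.2) := by
        intro s hs
        exact huv ⟨hIu hs, hq2⟩
      have h1 := rho_mem q.1
      simp only [Set.mem_Ico] at h1
      have e1 : m/2 ≤ T (rho q.1 - 1, q.2) := (hmem _ (by constructor <;> linarith)).le
      have e2 : m/2 ≤ T (rho q.1, q.2) := (hmem _ (by constructor <;> linarith)).le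
      have e3 : m/2 ≤ T (rho q.1 + 1, q.2) := (hmem _ (by constructor <;> linarith)).le
      show min (1/2) (m/2) ≤ G q
      simp only [hG]
      exact le_min (min_le_left _ _) (le_min ((min_le_right _ _).trans e1)
        (le_min ((min_le_right _ _).trans e2) ((min_le_right _ _).trans e3)))
    have hle : min (min (1/2) (m/2)) δ ≤ εf p := by
      simp only [hεf]
      apply le_ciInf
      intro q
      by_cases hq : dist p q < δ
      · have h1 := key q hq
        have h2 := dist_nonneg (x := p) (y := q)
        have h3 := min_le_left (min (1/2) (m/2)) δ
        linarith
      · push_neg at hq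
        have h1 := (hGpos q).le
        have h2 := min_le_right (min (1/2) (m/2)) δ
        linarith
    have hpos : (0:ℝ) < min (min (1/2) (m/2)) δ :=
      lt_min (lt_min (by norm_num) (by linarith)) hδpos
    linarith
  refine ⟨εf, hεf_cont, hεf_pos, ?_⟩
  -- the main estimate
  intro p q hpq
  set b := rho q.1 with hb
  set ρ := rho p.1 with hρ
  set e : ℤ := round (b - ρ) with he
  have hbm := rho_mem q.1; have hρm := rho_mem p.1
  simp only [Set.mem_Ico] at hbm hρm
  have heb : e = -1 ∨ e = 0 ∨ e = 1 := round_diff_mem p.1 q.1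
  have hbI : b ∈ Set.Icc (-1:ℝ) 2 := by constructor <;> linarith [hbm.1, hbm.2]
  have hρeI : ρ + e ∈ Set.Icc (-1:ℝ) 2 := by
    rcases heb with h | h | h <;> rw [h] <;> push_cast <;> constructor <;> linarith [hρm.1, hρm.2]
  have hdist1 : dist q.1 p.1 = |b - ρ - e| := by
    conv_lhs => rw [← coe_rho q.1, ← coe_rho p.1]
    rw [circle_dist_coe]
  -- the estimate
  have hest : ‖ginv b q.2 - ginv (ρ + e) p.2‖ ≤ C * ‖q.2 - p.2‖ + K * |b - (ρ + e)| * ‖p.2‖ := by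
    calc ‖ginv b q.2 - ginv (ρ + e) p.2‖
        = ‖ginv b (q.2 - p.2) + (ginv b - ginv (ρ + e)) p.2‖ := by
          congr 1
          simp only [map_sub, ContinuousLinearMap.sub_apply]
          abel
      _ ≤ ‖ginv b (q.2 - p.2)‖ + ‖(ginv b - ginv (ρ + e)) p.2‖ := norm_add_le _ _
      _ ≤ ‖ginv b‖ * ‖q.2 - p.2‖ + ‖ginv b - ginv (ρ + e)‖ * ‖p.2‖ :=
          add_le_add (ContinuousLinearMap.le_opNorm _ _) (ContinuousLinearMap.le_opNorm _ _)
      _ ≤ C * ‖q.2 - p.2‖ + K * |b - (ρ + e)| * ‖p.2‖ := by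
          apply add_le_add
          · exact mul_le_mul_of_nonneg_right (hCb b hbI) (norm_nonneg _)
          · exact mul_le_mul_of_nonneg_right (hginvLip _ hρeI _ hbI) (norm_nonneg _)
  have hGle : εf p ≤ T (ρ + e, p.2) := by
    refine le_trans (hεf_le p) ?_
    show G p ≤ _
    simp only [hG]
    rcases heb with h | h | h
    · have hq : ρ + (e:ℝ) = ρ - 1 := by rw [h]; push_cast; ring
      rw [hq]
      exact le_trans (min_le_right _ _) (min_le_left _ _)
    · have hq : ρ + (e:ℝ) = ρ := by rw [h]; push_cast; ring
      rw [hq]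
      exact le_trans (min_le_right _ _) (le_trans (min_le_right _ _) (min_le_left _ _))
    · have hq : ρ + (e:ℝ) = ρ + 1 := by rw [h]; push_cast; ring
      rw [hq]
      exact le_trans (min_le_right _ _) (le_trans (min_le_right _ _) (min_le_right _ _))
  have hTval : T (ρ + e, p.2) * (C + K * ‖p.2‖) = εd (ginv (ρ + e) p.2) := by
    rw [hT]
    exact div_mul_cancel₀ _ (hTden p.2).ne'
  have hfinal : C * ‖q.2 - p.2‖ + K * |b - (ρ + e)| * ‖p.2‖
      < (C + K * ‖p.2‖) * εf p := by
    have h1 : ‖q.2 - p.2‖ + |b - ρ - e| < εf p := by rw [hdist1] at hpq; linarith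
    have h2 : |b - (ρ + e)| = |b - ρ - e| := by ring_nf
    rw [h2]
    have hnn1 : (0:ℝ) ≤ ‖q.2 - p.2‖ := norm_nonneg _
    have hnn2 : (0:ℝ) ≤ |b - ρ - e| := abs_nonneg _
    have hnn3 : (0:ℝ) ≤ ‖p.2‖ := norm_nonneg _
    have h3 : (C + K * ‖p.2‖) * (‖q.2 - p.2‖ + |b - ρ - (e:ℝ)|) < (C + K * ‖p.2‖) * εf p :=
      mul_lt_mul_of_pos_left h1 (hTden p.2)
    nlinarith [h3, mul_nonneg hCpos.le hnn2, mul_nonneg (mul_nonneg hKnn hnn3) hnn1]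
  calc ‖ginv b q.2 - ginv (ρ + e) p.2‖ ≤ C * ‖q.2 - p.2‖ + K * |b - (ρ + e)| * ‖p.2‖ := hest
    _ < (C + K * ‖p.2‖) * εf p := hfinal
    _ ≤ (C + K * ‖p.2‖) * T (ρ + e, p.2) := by
        apply mul_le_mul_of_nonneg_left hGle (hTden p.2).le
    _ = εd (ginv (ρ + e) p.2) := by rw [mul_comm]; exact hTval

end EpsFlow

section Conversions
variable {F : Type*} [NormedAddCommGroup F] [NormedSpace ℝ F] [CompleteSpace F]
  {X g ginv : ℝ → F →L[ℝ] F} {φ : ℝ → UnitAddCircle × F → UnitAddCircle × F}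

theorem chainAll_trans {U T : Type*} [TopologicalSpace U] {d : U → U → ℝ} {σ : T → U → U}
    {Times : ℝ → Set T} {x y z : U} (h1 : ChainAll d σ Times x y) (h2 : ChainAll d σ Times y z) :
    ChainAll d σ Times x z :=
  fun ε c p t ht => isChainFrom_trans (h1 ε c p t ht) (h2 ε c p t ht)

theorem hard_conv (hX : Continuous X) (hXper : ∀ t, X (t + 1) = X t) (hg0 : g 0 = 1)
    (hg : ∀ t, HasDerivAt g (X t ∘L g t) t)
    (hinv : ∀ s, g s ∘L ginv s = 1 ∧ ginv s ∘L g s = 1)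
    (hφ : ∀ (t s : ℝ) (x : F),
      φ t ((s : UnitAddCircle), x) = (((s + t : ℝ) : UnitAddCircle), g (t + s) (ginv s x)))
    {p q : UnitAddCircle × F}
    (h : ChainAll (fun p q : UnitAddCircle × F => dist p.1 q.1 + ‖p.2 - q.2‖) φ
      (fun t => {r : ℝ | t < r}) p q) :
    ChainAll (fun x y : F => ‖x - y‖) (fun (n : ℕ) (x : F) => (g 1 ^ n) x)
      (fun t => {n : ℕ | t < (n : ℝ)}) (ginv (rho p.1) p.2) (ginv (rho q.1) q.2) := by
  intro εd hεc hεp t ht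
  obtain ⟨εf, hfc, hfp, hcrux⟩ := eps_flow_exists hX hg hinv εd hεc hεp
  have hch := h εf hfc hfp (t + 3) (by linarith)
  exact isChainFrom_map (fun u : UnitAddCircle × F => ginv (rho u.1) u.2) (by
    intro r hr u v hcond
    simp only [Set.mem_setOf_eq] at hr
    have hsu := rho_mem u.1
    simp only [Set.mem_Ico] at hsu
    set su := rho u.1 with hsu_def
    have hu : u = ((su : UnitAddCircle), u.2) := by
      rw [hsu_def, coe_rho]
    have hP : φ r u = (((su + r : ℝ) : UnitAddCircle), g (su + r) (ginv su u.2)) := by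
      conv_lhs => rw [hu]
      rw [hφ, add_comm r su]
    set x := ginv su u.2 with hx_def
    set M : ℤ := ⌊su + r⌋ with hM
    set s' := Int.fract (su + r) with hs'
    have hMge : (3:ℤ) ≤ M := by
      rw [hM, Int.le_floor]
      push_cast
      linarith
    have hMle : (M:ℝ) ≤ su + r := Int.floor_le _
    have hMgt : su + r - 1 < (M:ℝ) := Int.sub_one_lt_floor _
    have hrho : rho (φ r u).1 = s' := by
      rw [hP]
      exact rho_coe _
    have hsplit : s' + (M:ℝ) = su + r := by
      rw [hs', hM]
      exact Int.fract_add_floor _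
    set e := round (rho v.1 - s') with he
    have he3 : e = -1 ∨ e = 0 ∨ e = 1 := by
      have := round_diff_mem (φ r u).1 v.1
      rw [hrho] at this
      exact this
    have heabs : (-1:ℤ) ≤ e ∧ e ≤ 1 := by rcases he3 with h' | h' | h' <;> rw [h'] <;> omega
    set n : ℕ := (M - e).toNat with hn_def
    have hn : ((n:ℤ)) = M - e := Int.toNat_of_nonneg (by omega)
    have hnR : ((n:ℝ)) = (M:ℝ) - (e:ℝ) := by
      exact_mod_cast congrArg (Int.cast : ℤ → ℝ) hn
    have hkey : ginv (s' + e) (φ r u).2 = ((g 1) ^ n) x := by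
      have h2 : (φ r u).2 = g (su + r) x := by rw [hP]
      have h3 : (su + r : ℝ) = (s' + e) + n := by
        rw [hnR]
        push_cast
        linarith [hsplit]
      rw [h2, h3, g_add_nat hXper hg0 hg hinv (s' + (e:ℝ)) n]
      have h4 : (g (s' + (e:ℝ)) * (g 1) ^ n) x = g (s' + (e:ℝ)) (((g 1) ^ n) x) := rfl
      rw [h4]
      exact ginv_apply_g hinv _ _
    refine ⟨n, ?_, ?_⟩
    · simp only [Set.mem_setOf_eq]
      rw [hnR]
      have : (e:ℝ) ≤ 1 := by exact_mod_cast heabs.2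
      linarith
    · have hco := hcrux (φ r u) v hcond
      rw [hrho] at hco
      rw [hkey] at hco
      exact hco) hch

theorem easy_transport (hXper : ∀ t, X (t + 1) = X t) (hg0 : g 0 = 1)
    (hg : ∀ t, HasDerivAt g (X t ∘L g t) t)
    (hinv : ∀ s, g s ∘L ginv s = 1 ∧ ginv s ∘L g s = 1)
    (hφ : ∀ (t s : ℝ) (x : F),
      φ t ((s : UnitAddCircle), x) = (((s + t : ℝ) : UnitAddCircle), g (t + s) (ginv s x)))
    (s : ℝ) {x y : F}
    (h : ChainAll (fun x y : F => ‖x - y‖) (fun (n : ℕ) (x : F) => (g 1 ^ n) x)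
      (fun t => {n : ℕ | t < (n : ℝ)}) x y) :
    ChainAll (fun p q : UnitAddCircle × F => dist p.1 q.1 + ‖p.2 - q.2‖) φ
      (fun t => {r : ℝ | t < r})
      ((s : UnitAddCircle), g s x) ((s : UnitAddCircle), g s y) := by
  intro εf hεc hεp t ht
  set εd : F → ℝ := fun u => εf ((s : UnitAddCircle), g s u) / (‖g s‖ + 1) with hεd
  have hgsnn : (0:ℝ) ≤ ‖g s‖ := norm_nonneg _
  have hcont : Continuous εd := by
    apply Continuous.div_const
    exact hεc.comp (continuous_const.prodMk (g s).continuous)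
  have hpos : ∀ u, 0 < εd u := fun u => div_pos (hεp _) (by linarith)
  have hch := h εd hcont hpos t ht
  exact isChainFrom_map (fun u : F => ((s : UnitAddCircle), g s u)) (by
    intro n hn u v hcond
    simp only [Set.mem_setOf_eq] at hn
    refine ⟨(n:ℝ), hn, ?_⟩
    have hco : ((s + (n:ℕ) : ℝ) : UnitAddCircle) = (s : UnitAddCircle) := by
      have := coe_add_int s (n:ℤ)
      push_cast at this ⊢
      exact this
    have hval : φ (n:ℝ) ((s : UnitAddCircle), g s u) = ((s : UnitAddCircle), g s (((g 1)^n) u)) := by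
      rw [hφ]
      refine Prod.ext ?_ ?_
      · exact hco
      · show g ((n:ℝ) + s) (ginv s (g s u)) = _
        rw [ginv_apply_g hinv, add_comm ((n:ℝ)) s, g_add_nat hXper hg0 hg hinv s n]
        rfl
    rw [hval]
    show dist (s : UnitAddCircle) (s : UnitAddCircle) + ‖g s v - g s (((g 1)^n) u)‖
      < εf ((s : UnitAddCircle), g s (((g 1)^n) u))
    rw [dist_self, zero_add, ← map_sub]
    set w := ((g 1)^n) u
    have h1 : ‖(g s) (v - w)‖ ≤ ‖g s‖ * ‖v - w‖ := ContinuousLinearMap.le_opNorm _ _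
    have h2 : ‖v - w‖ < εd w := hcond
    have h3 : (‖g s‖ + 1) * εd w = εf ((s : UnitAddCircle), g s w) := by
      rw [hεd]
      rw [mul_comm]
      exact div_mul_cancel₀ _ (by linarith)
    have h4 : ‖g s‖ * ‖v - w‖ < (‖g s‖ + 1) * εd w := by
      have := hpos w
      nlinarith
    linarith) hch

end Conversions
section CEGeneric
variable {U T : Type*} [TopologicalSpace U] {d : U → U → ℝ} {σ : T → U → U}
  {Times : ℝ → Set T}

theorem chainEquiv_iff' {x y : U} :
    ChainEquiv d σ Times x y ↔ ChainAll d σ Times x y ∧ ChainAll d σ Times y x := by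
  constructor
  · exact fun h => ⟨fun ε hc hp t ht => (h ε hc hp t ht).1, fun ε hc hp t ht => (h ε hc hp t ht).2⟩
  · exact fun h ε hc hp t ht => ⟨h.1 ε hc hp t ht, h.2 ε hc hp t ht⟩

theorem chainEquiv_symm {x y : U} (h : ChainEquiv d σ Times x y) : ChainEquiv d σ Times y x :=
  fun ε hc hp t ht => ⟨(h ε hc hp t ht).2, (h ε hc hp t ht).1⟩

theorem chainEquiv_trans {x y z : U} (h1 : ChainEquiv d σ Times x y)
    (h2 : ChainEquiv d σ Times y z) : ChainEquiv d σ Times x z := by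
  rw [chainEquiv_iff'] at h1 h2 ⊢
  exact ⟨chainAll_trans h1.1 h2.1, chainAll_trans h2.2 h1.2⟩

theorem class_eq_of_chainEquiv {x y : U} (h : ChainEquiv d σ Times x y) :
    {z | ChainEquiv d σ Times z z ∧ ChainEquiv d σ Times x z}
      = {z | ChainEquiv d σ Times z z ∧ ChainEquiv d σ Times y z} := by
  ext z
  simp only [Set.mem_setOf_eq]
  constructor
  · rintro ⟨h1, h2⟩
    exact ⟨h1, chainEquiv_trans (chainEquiv_symm h) h2⟩
  · rintro ⟨h1, h2⟩
    exact ⟨h1, chainEquiv_trans h h2⟩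

end CEGeneric

section Final
variable {F : Type*} [NormedAddCommGroup F] [NormedSpace ℝ F] [CompleteSpace F]
  {X g ginv : ℝ → F →L[ℝ] F} {φ : ℝ → UnitAddCircle × F → UnitAddCircle × F}

theorem rho_zero : rho (0 : UnitAddCircle) = 0 := by
  have h0 : ((0:ℝ) : UnitAddCircle) = 0 := rfl
  rw [← h0, rho_coe]
  simp

theorem chainAll_prepend_pow
    {x y : F} (h : ChainAll (fun x y : F => ‖x - y‖) (fun (n : ℕ) (x : F) => (g 1 ^ n) x)
      (fun t => {n : ℕ | t < (n : ℝ)}) x y) (N : ℕ) :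
    ChainAll (fun x y : F => ‖x - y‖) (fun (n : ℕ) (x : F) => (g 1 ^ n) x)
      (fun t => {n : ℕ | t < (n : ℝ)}) ((g 1 ^ N) x) y := by
  intro ε hc hp t ht
  have hN : (0:ℝ) ≤ N := by positivity
  exact isChainFrom_prepend_pow (g 1) ht N (h ε hc hp (t + N) (by linarith))

theorem chainAll_append_pow
    {x y : F} (h : ChainAll (fun x y : F => ‖x - y‖) (fun (n : ℕ) (x : F) => (g 1 ^ n) x)
      (fun t => {n : ℕ | t < (n : ℝ)}) x y) (N : ℕ) :
    ChainAll (fun x y : F => ‖x - y‖) (fun (n : ℕ) (x : F) => (g 1 ^ n) x)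
      (fun t => {n : ℕ | t < (n : ℝ)}) x ((g 1 ^ N) y) := by
  intro ε hc hp t ht
  have hc' : Continuous (fun u => min (ε u) (ε ((g 1 ^ N) u) / (‖(g 1 ^ N : F →L[ℝ] F)‖ + 1))) := by
    apply hc.min
    apply Continuous.div_const
    exact hc.comp (g 1 ^ N).continuous
  have hp' : ∀ u, 0 < min (ε u) (ε ((g 1 ^ N) u) / (‖(g 1 ^ N : F →L[ℝ] F)‖ + 1)) := by
    intro u
    apply lt_min (hp u)
    apply div_pos (hp _)
    have : (0:ℝ) ≤ ‖(g 1 ^ N : F →L[ℝ] F)‖ := norm_nonneg _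
    linarith
  exact isChainFrom_append_pow (g 1) N (h _ hc' hp' t ht) hp

theorem flow_zero_to_s (hXper : ∀ t, X (t + 1) = X t) (hg0 : g 0 = 1)
    (hg : ∀ t, HasDerivAt g (X t ∘L g t) t)
    (hinv : ∀ s, g s ∘L ginv s = 1 ∧ ginv s ∘L g s = 1)
    (hφ : ∀ (t s : ℝ) (x : F),
      φ t ((s : UnitAddCircle), x) = (((s + t : ℝ) : UnitAddCircle), g (t + s) (ginv s x)))
    (s : ℝ) {y : F}
    (hy : ChainAll (fun x y : F => ‖x - y‖) (fun (n : ℕ) (x : F) => (g 1 ^ n) x)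
      (fun t => {n : ℕ | t < (n : ℝ)}) y y) :
    ChainAll (fun p q : UnitAddCircle × F => dist p.1 q.1 + ‖p.2 - q.2‖) φ
      (fun t => {r : ℝ | t < r}) ((0 : UnitAddCircle), y) ((s : UnitAddCircle), g s y) := by
  intro εf hc hp t ht
  obtain ⟨N, hN⟩ := exists_nat_gt (t - s)
  have hstep : IsChainFrom (fun p q : UnitAddCircle × F => dist p.1 q.1 + ‖p.2 - q.2‖) φ
      {r : ℝ | t < r} εf ((0 : UnitAddCircle), y) ((s : UnitAddCircle), g s ((g 1 ^ N) y)) := by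
    refine ⟨0, fun _ => s + N, ![((0 : UnitAddCircle), y), ((s : UnitAddCircle), g s ((g 1 ^ N) y))],
      rfl, rfl, ?_, ?_⟩
    · intro i
      simp only [Set.mem_setOf_eq]
      linarith
    · intro i
      have hi : i = 0 := by omega
      subst hi
      have h0 : (![((0 : UnitAddCircle), y), ((s : UnitAddCircle), g s ((g 1 ^ N) y))]
          (Fin.castSucc 0)) = ((0 : UnitAddCircle), y) := rfl
      have h1 : (![((0 : UnitAddCircle), y), ((s : UnitAddCircle), g s ((g 1 ^ N) y))]
          (Fin.succ 0)) = ((s : UnitAddCircle), g s ((g 1 ^ N) y)) := rfl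
      rw [h0, h1]
      have hcoe : ((0 : UnitAddCircle), y) = (((0:ℝ) : UnitAddCircle), y) := rfl
      have hval : φ (s + N) (((0:ℝ) : UnitAddCircle), y)
          = ((s : UnitAddCircle), g s ((g 1 ^ N) y)) := by
        rw [hφ]
        refine Prod.ext ?_ ?_
        · show (((0 : ℝ) + (s + N) : ℝ) : UnitAddCircle) = (s : UnitAddCircle)
          rw [zero_add]
          have := coe_add_int s (N:ℤ)
          push_cast at this
          exact this
        · show g ((s + N) + 0) (ginv 0 y) = g s ((g 1 ^ N) y)
          rw [ginv_zero hg0 hinv, add_zero]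
          have : g (s + (N:ℕ)) = g s * (g 1) ^ N := g_add_nat hXper hg0 hg hinv s N
          calc g (s + (N:ℝ)) (ContinuousLinearMap.id ℝ F y) = g (s + (N:ℕ)) y := by norm_num
            _ = (g s * (g 1) ^ N) y := by rw [this]
            _ = g s ((g 1 ^ N) y) := rfl
      rw [hcoe, hval]
      simp only [dist_self, sub_self, norm_zero, add_zero]
      exact hp _
  have htrans := easy_transport hXper hg0 hg hinv hφ s (chainAll_prepend_pow hy N)
    εf hc hp t ht
  exact isChainFrom_trans hstep htrans

theorem flow_s_to_zero (hXper : ∀ t, X (t + 1) = X t) (hg0 : g 0 = 1)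
    (hg : ∀ t, HasDerivAt g (X t ∘L g t) t)
    (hinv : ∀ s, g s ∘L ginv s = 1 ∧ ginv s ∘L g s = 1)
    (hφ : ∀ (t s : ℝ) (x : F),
      φ t ((s : UnitAddCircle), x) = (((s + t : ℝ) : UnitAddCircle), g (t + s) (ginv s x)))
    (s : ℝ) {y : F}
    (hy : ChainAll (fun x y : F => ‖x - y‖) (fun (n : ℕ) (x : F) => (g 1 ^ n) x)
      (fun t => {n : ℕ | t < (n : ℝ)}) y y) :
    ChainAll (fun p q : UnitAddCircle × F => dist p.1 q.1 + ‖p.2 - q.2‖) φ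
      (fun t => {r : ℝ | t < r}) ((s : UnitAddCircle), g s y) ((0 : UnitAddCircle), y) := by
  intro εf hc hp t ht
  obtain ⟨N, hN⟩ := exists_nat_gt (t - (1 - s))
  have hstep : IsChainFrom (fun p q : UnitAddCircle × F => dist p.1 q.1 + ‖p.2 - q.2‖) φ
      {r : ℝ | t < r} εf ((s : UnitAddCircle), g s y) ((0 : UnitAddCircle), (g 1 ^ (N+1)) y) := by
    refine ⟨0, fun _ => (1 - s) + N, ![((s : UnitAddCircle), g s y), ((0 : UnitAddCircle), (g 1 ^ (N+1)) y)],
      rfl, rfl, ?_, ?_⟩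
    · intro i
      simp only [Set.mem_setOf_eq]
      linarith
    · intro i
      have hi : i = 0 := by omega
      subst hi
      have h0 : (![((s : UnitAddCircle), g s y), ((0 : UnitAddCircle), (g 1 ^ (N+1)) y)]
          (Fin.castSucc 0)) = ((s : UnitAddCircle), g s y) := rfl
      have h1 : (![((s : UnitAddCircle), g s y), ((0 : UnitAddCircle), (g 1 ^ (N+1)) y)]
          (Fin.succ 0)) = ((0 : UnitAddCircle), (g 1 ^ (N+1)) y) := rfl
      rw [h0, h1]
      have hval : φ ((1 - s) + N) ((s : UnitAddCircle), g s y)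
          = ((0 : UnitAddCircle), (g 1 ^ (N+1)) y) := by
        rw [hφ]
        refine Prod.ext ?_ ?_
        · show ((s + ((1 - s) + N) : ℝ) : UnitAddCircle) = (0 : UnitAddCircle)
          have harith : (s + ((1 - s) + N) : ℝ) = (0 : ℝ) + ((N + 1 : ℤ) : ℝ) := by
            push_cast; ring
          rw [harith, coe_add_int]
          rfl
        · show g (((1 - s) + N) + s) (ginv s (g s y)) = (g 1 ^ (N+1)) y
          rw [ginv_apply_g hinv]
          have harith : (((1 - s) + N) + s : ℝ) = (0 : ℝ) + ((N + 1 : ℕ) : ℝ) := by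
            push_cast; ring
          rw [harith, g_add_nat hXper hg0 hg hinv 0 (N+1), hg0, one_mul]
      rw [hval]
      simp only [dist_self, sub_self, norm_zero, add_zero]
      exact hp _
  have htrans' := easy_transport hXper hg0 hg hinv hφ 0 (chainAll_prepend_pow hy (N+1))
    εf hc hp t ht
  have hzero : (((0:ℝ) : UnitAddCircle), g 0 ((g 1 ^ (N+1)) y)) = ((0 : UnitAddCircle), (g 1 ^ (N+1)) y) := by
    rw [hg0]; rfl
  have hzero2 : (((0:ℝ) : UnitAddCircle), g 0 y) = ((0 : UnitAddCircle), y) := by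
    rw [hg0]; rfl
  rw [hzero, hzero2] at htrans'
  exact isChainFrom_trans hstep htrans'

end Final
/-- The map `E ↦ S¹ ×_g E` is a bijection between the chain transitive components of the
discrete-time flow generated by `g = g 1` on `F` and those of the skew-product flow `φᵗ`. -/
theorem chain_components_bijection
    {F : Type*} [NormedAddCommGroup F] [NormedSpace ℝ F] [CompleteSpace F]
    (X g ginv : ℝ → F →L[ℝ] F)
    (hX : Continuous X) (hXper : ∀ t, X (t + 1) = X t)
    (hg0 : g 0 = 1) (hg : ∀ t, HasDerivAt g (X t ∘L g t) t)
    (hinv : ∀ s, g s ∘L ginv s = 1 ∧ ginv s ∘L g s = 1)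
    (φ : ℝ → UnitAddCircle × F → UnitAddCircle × F)
    (hφ : ∀ (t s : ℝ) (x : F),
      φ t ((s : UnitAddCircle), x) = (((s + t : ℝ) : UnitAddCircle), g (t + s) (ginv s x))) :
    Set.BijOn (fun E : Set F => ⋃ s : ℝ, (fun y => ((s : UnitAddCircle), y)) '' (g s '' E))
      (ChainComponents (fun x y => ‖x - y‖) (fun (n : ℕ) (x : F) => (g 1 ^ n) x)
        (fun t => {n : ℕ | t < (n : ℝ)}))
      (ChainComponents (fun p q => dist p.1 q.1 + ‖p.2 - q.2‖) φ
        (fun t => {r : ℝ | t < r})) := by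
  classical
  -- bridging lemmas
  have hardCE : ∀ p q : UnitAddCircle × F,
      ChainEquiv (fun p q : UnitAddCircle × F => dist p.1 q.1 + ‖p.2 - q.2‖) φ
        (fun t => {r : ℝ | t < r}) p q →
      ChainEquiv (fun x y : F => ‖x - y‖) (fun (n : ℕ) (x : F) => (g 1 ^ n) x)
        (fun t => {n : ℕ | t < (n : ℝ)}) (ginv (rho p.1) p.2) (ginv (rho q.1) q.2) := by
    intro p q h
    rw [chainEquiv_iff'] at h ⊢
    exact ⟨hard_conv hX hXper hg0 hg hinv hφ h.1, hard_conv hX hXper hg0 hg hinv hφ h.2⟩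
  have easyCE : ∀ (s : ℝ) (x y : F),
      ChainEquiv (fun x y : F => ‖x - y‖) (fun (n : ℕ) (x : F) => (g 1 ^ n) x)
        (fun t => {n : ℕ | t < (n : ℝ)}) x y →
      ChainEquiv (fun p q : UnitAddCircle × F => dist p.1 q.1 + ‖p.2 - q.2‖) φ
        (fun t => {r : ℝ | t < r}) ((s : UnitAddCircle), g s x) ((s : UnitAddCircle), g s y) := by
    intro s x y h
    rw [chainEquiv_iff'] at h ⊢
    exact ⟨easy_transport hXper hg0 hg hinv hφ s h.1, easy_transport hXper hg0 hg hinv hφ s h.2⟩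
  have e0 : ∀ z : F, (((0:ℝ) : UnitAddCircle), g 0 z) = ((0 : UnitAddCircle), z) := by
    intro z
    rw [hg0]
    rfl
  have easyCE0 : ∀ (x y : F),
      ChainEquiv (fun x y : F => ‖x - y‖) (fun (n : ℕ) (x : F) => (g 1 ^ n) x)
        (fun t => {n : ℕ | t < (n : ℝ)}) x y →
      ChainEquiv (fun p q : UnitAddCircle × F => dist p.1 q.1 + ‖p.2 - q.2‖) φ
        (fun t => {r : ℝ | t < r}) ((0 : UnitAddCircle), x) ((0 : UnitAddCircle), y) := by
    intro x y h
    have := easyCE 0 x y h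
    rwa [e0, e0] at this
  have fiberCE : ∀ (s : ℝ) (y : F),
      ChainAll (fun x y : F => ‖x - y‖) (fun (n : ℕ) (x : F) => (g 1 ^ n) x)
        (fun t => {n : ℕ | t < (n : ℝ)}) y y →
      ChainEquiv (fun p q : UnitAddCircle × F => dist p.1 q.1 + ‖p.2 - q.2‖) φ
        (fun t => {r : ℝ | t < r}) ((0 : UnitAddCircle), y) ((s : UnitAddCircle), g s y) := by
    intro s y hy
    rw [chainEquiv_iff']
    exact ⟨flow_zero_to_s hXper hg0 hg hinv hφ s hy, flow_s_to_zero hXper hg0 hg hinv hφ s hy⟩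
  have sh0 : ∀ x : F, ginv (rho (0 : UnitAddCircle)) x = x := by
    intro x
    rw [rho_zero, ginv_zero hg0 hinv]
    rfl
  have decomp : ∀ p : UnitAddCircle × F,
      (((rho p.1 : ℝ) : UnitAddCircle), g (rho p.1) (ginv (rho p.1) p.2)) = p := by
    intro p
    exact Prod.ext (coe_rho p.1) (g_apply_ginv hinv _ _)
  -- the image of a component is a component
  have imageClass : ∀ x₀ : F,
      ChainEquiv (fun x y : F => ‖x - y‖) (fun (n : ℕ) (x : F) => (g 1 ^ n) x)
        (fun t => {n : ℕ | t < (n : ℝ)}) x₀ x₀ →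
      (⋃ s : ℝ, (fun y => ((s : UnitAddCircle), y)) '' (g s ''
          {y | ChainEquiv (fun x y : F => ‖x - y‖) (fun (n : ℕ) (x : F) => (g 1 ^ n) x)
            (fun t => {n : ℕ | t < (n : ℝ)}) y y ∧
            ChainEquiv (fun x y : F => ‖x - y‖) (fun (n : ℕ) (x : F) => (g 1 ^ n) x)
            (fun t => {n : ℕ | t < (n : ℝ)}) x₀ y}))
        = {q | ChainEquiv (fun p q : UnitAddCircle × F => dist p.1 q.1 + ‖p.2 - q.2‖) φ
            (fun t => {r : ℝ | t < r}) q q ∧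
            ChainEquiv (fun p q : UnitAddCircle × F => dist p.1 q.1 + ‖p.2 - q.2‖) φ
            (fun t => {r : ℝ | t < r}) ((0 : UnitAddCircle), x₀) q} := by
    intro x₀ hx₀
    ext q
    simp only [Set.mem_iUnion, Set.mem_image, Set.mem_setOf_eq]
    constructor
    · rintro ⟨s, w, ⟨y, ⟨hyy, hx0y⟩, rfl⟩, rfl⟩
      have hyyA := (chainEquiv_iff'.1 hyy).1
      have hfib := fiberCE s y hyyA
      have h0 := easyCE0 x₀ y hx0y
      exact ⟨chainEquiv_trans (chainEquiv_symm hfib) hfib, chainEquiv_trans h0 hfib⟩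
    · rintro ⟨hqq, h0q⟩
      refine ⟨rho q.1, g (rho q.1) (ginv (rho q.1) q.2), ⟨ginv (rho q.1) q.2, ⟨?_, ?_⟩, rfl⟩, ?_⟩
      · exact hardCE q q hqq
      · have := hardCE ((0 : UnitAddCircle), x₀) q h0q
        rwa [sh0] at this
      · exact decomp q
  constructor
  · -- MapsTo
    rintro E ⟨x₀, hx₀, rfl⟩
    exact ⟨((0 : UnitAddCircle), x₀), easyCE0 x₀ x₀ hx₀, imageClass x₀ hx₀⟩
  constructor
  · -- InjOn
    rintro E1 ⟨x₀, hx₀, rfl⟩ E2 ⟨x₁, hx₁, rfl⟩ heq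
    simp only [] at heq
    rw [imageClass x₀ hx₀, imageClass x₁ hx₁] at heq
    have hmem : ((0 : UnitAddCircle), x₁) ∈
        {q | ChainEquiv (fun p q : UnitAddCircle × F => dist p.1 q.1 + ‖p.2 - q.2‖) φ
            (fun t => {r : ℝ | t < r}) q q ∧
            ChainEquiv (fun p q : UnitAddCircle × F => dist p.1 q.1 + ‖p.2 - q.2‖) φ
            (fun t => {r : ℝ | t < r}) ((0 : UnitAddCircle), x₁) q} :=
      ⟨easyCE0 x₁ x₁ hx₁, easyCE0 x₁ x₁ hx₁⟩
    rw [← heq] at hmem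
    have h01 := hmem.2
    have hCE := hardCE _ _ h01
    rw [sh0, sh0] at hCE
    exact class_eq_of_chainEquiv hCE
  · -- SurjOn
    rintro C ⟨p₀, hp₀, rfl⟩
    have hx₀ := hardCE p₀ p₀ hp₀
    refine ⟨{y | ChainEquiv (fun x y : F => ‖x - y‖) (fun (n : ℕ) (x : F) => (g 1 ^ n) x)
        (fun t => {n : ℕ | t < (n : ℝ)}) y y ∧
        ChainEquiv (fun x y : F => ‖x - y‖) (fun (n : ℕ) (x : F) => (g 1 ^ n) x)
        (fun t => {n : ℕ | t < (n : ℝ)}) (ginv (rho p₀.1) p₀.2) y},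
      ⟨ginv (rho p₀.1) p₀.2, hx₀, rfl⟩, ?_⟩
    simp only []
    rw [imageClass _ hx₀]
    have hfib := fiberCE (rho p₀.1) (ginv (rho p₀.1) p₀.2) (chainEquiv_iff'.1 hx₀).1
    rw [decomp p₀] at hfib
    exact class_eq_of_chainEquiv hfib
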